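/- Assume P_XY(x,y) > 0 for all (x,y) ∈ 𝒳×𝒴 and that for every θ ∈ (0,1) the map k ↦ T₀(θ,k) on 𝒴 is not constant. Then for every ε ∈ (0,1/2), the limit superior as n → ∞ of the probability that Θ₁ ∉ Δ_n^ε(Y^n) is at most 2ε, where Y^n = (Y_1,…,Y_n) is the source sequence of the construction. -/

import Mathlib

open MeasureTheory ProbabilityTheory Filter

/-- The left endpoint of the `j`-th partition interval: the cumulative mass of the indices
preceding `j`.  The `j`-th open interval of the partition is `(cum p j, cum p j + p j)`. -/
noncomputable def cum {m : ℕ} (p : Fin m → ℝ) (j : Fin m) : ℝ :=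
  ∑ j' ∈ Finset.univ.filter (fun j' => j' < j), p j'

/-- The forward orbit of `θ` under the `θ`-component maps driven by the source word `y`:
`orb T0 y 0 θ = θ` and `orb T0 y (n+1) θ = T0 (orb T0 y n θ) (y n)`.  Thus `orb T0 y n` is
`T0 (·, yₙ) ∘ ⋯ ∘ T0 (·, y₁)`. -/
def orb {b : ℕ} (T0 : ℝ → Fin b → ℝ) (y : ℕ → Fin b) : ℕ → ℝ → ℝ
  | 0, θ => θ
  | n + 1, θ => T0 (orb T0 y n θ) (y n)

/-- The decoding interval `Δ_n^ε(y^n) = ω_{y₁} ∘ ⋯ ∘ ω_{yₙ} ((ε, 1-ε))` where `ω_k` is the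
inverse of the increasing bijection `T0 (·, k) : [0,1] → [0,1]`; equivalently, the set of
`θ ∈ (0,1)` whose `n`-step forward orbit driven by `y` lands in `(ε, 1-ε)`. -/
def delta {b : ℕ} (T0 : ℝ → Fin b → ℝ) (ε : ℝ) (n : ℕ) (y : ℕ → Fin b) : Set ℝ :=
  {θ ∈ Set.Ioo (0:ℝ) 1 | orb T0 y n θ ∈ Set.Ioo ε (1 - ε)}

section helpers

variable {m : ℕ} {p : Fin m → ℝ}

theorem cum_nonneg (h0 : ∀ i, 0 ≤ p i) (i : Fin m) : 0 ≤ cum p i :=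
  Finset.sum_nonneg fun j _ => h0 j

theorem cum_add_le (h0 : ∀ i, 0 ≤ p i) {i i' : Fin m} (hii : i < i') :
    cum p i + p i ≤ cum p i' := by
  have hni : i ∉ Finset.univ.filter (fun j => j < i) := by simp
  have : cum p i + p i = ∑ j ∈ insert i (Finset.univ.filter (fun j => j < i)), p j := by
    rw [Finset.sum_insert hni, add_comm, cum]
  rw [this]
  refine Finset.sum_le_sum_of_subset_of_nonneg ?_ fun j _ _ => h0 j
  intro j hj
  simp only [Finset.mem_insert, Finset.mem_filter, Finset.mem_univ, true_and] at hj ⊢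
  rcases hj with rfl | hj
  · exact hii
  · exact hj.trans hii

theorem cum_add_le_sum (h0 : ∀ i, 0 ≤ p i) (i : Fin m) : cum p i + p i ≤ ∑ j, p j := by
  have hni : i ∉ Finset.univ.filter (fun j => j < i) := by simp
  have : cum p i + p i = ∑ j ∈ insert i (Finset.univ.filter (fun j => j < i)), p j := by
    rw [Finset.sum_insert hni, add_comm, cum]
  rw [this]
  exact Finset.sum_le_sum_of_subset_of_nonneg (fun j _ => Finset.mem_univ j)
    fun j _ _ => h0 j

theorem Ioo_subset_unit (h0 : ∀ i, 0 ≤ p i) (h1 : ∑ j, p j = 1) (i : Fin m) :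
    Set.Ioo (cum p i) (cum p i + p i) ⊆ Set.Ioo (0:ℝ) 1 := by
  intro x hx
  exact ⟨lt_of_le_of_lt (cum_nonneg h0 i) hx.1, lt_of_lt_of_le hx.2 (h1 ▸ cum_add_le_sum h0 i)⟩

theorem cum_pairwise_disjoint (h0 : ∀ i, 0 ≤ p i) :
    Pairwise (Function.onFun Disjoint fun i => Set.Ioo (cum p i) (cum p i + p i)) := by
  intro i j hij
  rcases lt_or_gt_of_ne hij with h | h
  · refine Set.disjoint_left.2 fun x hx hx' => ?_
    exact absurd (hx.2.trans_le ((cum_add_le h0 h).trans hx'.1.le)) (lt_irrefl x)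
  · refine Set.disjoint_left.2 fun x hx hx' => ?_
    exact absurd (hx'.2.trans_le ((cum_add_le h0 h).trans hx.1.le)) (lt_irrefl x)

/-- Every point of `(0,1)` which is not a right endpoint lies in some open interval. -/
theorem cum_cover (h0 : ∀ i, 0 ≤ p i) (h1 : ∑ j, p j = 1) {θ : ℝ}
    (hθ : θ ∈ Set.Ioo (0:ℝ) 1) (hne : ∀ i, θ ≠ cum p i + p i) :
    ∃ i, θ ∈ Set.Ioo (cum p i) (cum p i + p i) := by
  have hm : 0 < m := by
    rcases Nat.eq_zero_or_pos m with rfl | h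
    · simp at h1
    · exact h
  set S : Finset (Fin m) := Finset.univ.filter (fun i => cum p i < θ) with hS
  have h0mem : (⟨0, hm⟩ : Fin m) ∈ S := by
    have : cum p ⟨0, hm⟩ = 0 := by
      rw [cum]
      apply Finset.sum_eq_zero
      intro j hj
      simp only [Finset.mem_filter] at hj
      exact absurd hj.2 (by simp [Fin.lt_def])
    simp only [hS, Finset.mem_filter, Finset.mem_univ, true_and, this]
    exact hθ.1
  have hSne : S.Nonempty := ⟨_, h0mem⟩
  set i := S.max' hSne with hi
  have hiS : i ∈ S := S.max'_mem hSne
  have hlt : cum p i < θ := by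
    simpa [hS] using (Finset.mem_filter.1 hiS).2
  refine ⟨i, hlt, ?_⟩
  have hle : θ ≤ cum p i + p i := by
    by_contra hgt
    push_neg at hgt
    -- consider successor of i
    by_cases htop : (i : ℕ) + 1 < m
    · have hmem : (⟨(i : ℕ) + 1, htop⟩ : Fin m) ∈ S := by
        simp only [hS, Finset.mem_filter, Finset.mem_univ, true_and]
        have hsucc : cum p ⟨(i : ℕ) + 1, htop⟩ = cum p i + p i := by
          rw [cum, cum]
          have : Finset.univ.filter (fun j => j < (⟨(i : ℕ) + 1, htop⟩ : Fin m))
              = insert i (Finset.univ.filter (fun j => j < i)) := by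
            ext j
            simp only [Finset.mem_filter, Finset.mem_univ, true_and, Finset.mem_insert,
              Fin.lt_def, Nat.lt_succ_iff_lt_or_eq, Fin.ext_iff]
            tauto
          rw [this, Finset.sum_insert (by simp), add_comm]
        rw [hsucc]
        exact hgt
      have := S.le_max' _ hmem
      rw [← hi] at this
      exact absurd this (by simp [Fin.le_def])
    · -- i is the last index
      push_neg at htop
      have hname : cum p i + p i = ∑ j, p j := by
        rw [cum]
        have : Finset.univ.filter (fun j => j < i) = Finset.univ.erase i := by
          ext j
          simp only [Finset.mem_filter, Finset.mem_univ, true_and, Finset.mem_erase, and_true]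
          constructor
          · intro hj; exact ne_of_lt hj
          · intro hj
            have hjm : (j : ℕ) < m := j.isLt
            have : (j : ℕ) ≠ (i : ℕ) := fun h => hj (Fin.ext h)
            have him : (i : ℕ) = m - 1 := by omega
            rw [Fin.lt_def]
            omega
        rw [this, Finset.sum_erase_add _ _ (Finset.mem_univ i)]
      rw [hname, h1] at hgt
      exact absurd (hθ.2.trans hgt) (lt_irrefl θ)
  exact lt_of_le_of_ne hle (hne i)

theorem restrict_Ioo_sum (h0 : ∀ i, 0 ≤ p i) (h1 : ∑ j, p j = 1) :
    ∑ i, (volume : Measure ℝ).restrict (Set.Ioo (cum p i) (cum p i + p i))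
      = volume.restrict (Set.Ioo (0:ℝ) 1) := by
  rw [← Measure.sum_fintype, ← Measure.restrict_iUnion (cum_pairwise_disjoint h0)
    (fun i => measurableSet_Ioo)]
  apply Measure.restrict_congr_set
  rw [Filter.eventuallyEq_set]
  have hnull : volume ((Set.range fun i : Fin m => cum p i + p i)) = 0 :=
    (Set.finite_range _).measure_zero _
  rw [← MeasureTheory.compl_mem_ae_iff] at hnull
  filter_upwards [hnull] with x hx
  simp only [Set.mem_compl_iff, Set.mem_range, not_exists] at hx
  constructor
  · rintro ⟨s, ⟨i, rfl⟩, hxs⟩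
    exact Ioo_subset_unit h0 h1 i hxs
  · intro hx01
    rcases cum_cover h0 h1 hx01 (fun i h => hx i h.symm) with ⟨i, hi⟩
    exact Set.mem_iUnion.2 ⟨i, hi⟩

end helpers


theorem smul_prod' {α β : Type*} [MeasurableSpace α] [MeasurableSpace β]
    (μ : Measure α) (ν : Measure β) (c : ENNReal) [SFinite μ] [SFinite ν] :
    (c • μ).prod ν = c • (μ.prod ν) := by
  ext s hs
  rw [Measure.prod_apply hs, Measure.smul_apply, Measure.prod_apply hs,
    lintegral_smul_measure, smul_eq_mul]

theorem prod_smul' {α β : Type*} [MeasurableSpace α] [MeasurableSpace β]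
    (μ : Measure α) (ν : Measure β) (c : ENNReal) [SFinite μ] [SFinite ν] :
    μ.prod (c • ν) = c • (μ.prod ν) := by
  ext s hs
  rw [Measure.prod_apply hs, Measure.smul_apply, Measure.prod_apply hs, smul_eq_mul,
    ← lintegral_const_mul c (measurable_measure_prodMk_left hs)]
  simp only [Measure.smul_apply, smul_eq_mul]

theorem sum_prod' {ι : Type*} [Fintype ι] {α β : Type*} [MeasurableSpace α] [MeasurableSpace β]
    (μ : ι → Measure α) (ν : Measure β) [SFinite ν] :
    (∑ i, μ i).prod ν = ∑ i, (μ i).prod ν := by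
  rw [← Measure.sum_fintype, Measure.prod_sum_left, Measure.sum_fintype]

theorem prod_sum' {ι : Type*} [Fintype ι] {α β : Type*} [MeasurableSpace α] [MeasurableSpace β]
    (μ : Measure α) (ν : ι → Measure β) [∀ i, SFinite (ν i)] :
    μ.prod (∑ i, ν i) = ∑ i, μ.prod (ν i) := by
  rw [← Measure.sum_fintype, Measure.prod_sum_right, Measure.sum_fintype]

theorem map_sum' {ι : Type*} [Fintype ι] {α β : Type*} [MeasurableSpace α] [MeasurableSpace β]
    {f : α → β} (hf : Measurable f) (μ : ι → Measure α) :
    Measure.map f (∑ i, μ i) = ∑ i, Measure.map f (μ i) := by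
  ext s hs
  rw [Measure.map_apply hf hs, Measure.finset_sum_apply, Measure.finset_sum_apply]
  exact Finset.sum_congr rfl fun i _ => (Measure.map_apply hf hs).symm

theorem map_affine_Ioo (s : ℝ) (hs : 0 < s) (β u v : ℝ) :
    Measure.map (fun x => s * x + β) (volume.restrict (Set.Ioo u v))
      = ENNReal.ofReal s⁻¹ • volume.restrict (Set.Ioo (s * u + β) (s * v + β)) := by
  have he : MeasurableEmbedding (fun x : ℝ => s * x + β) :=
    (affineHomeomorph s β hs.ne').measurableEmbedding
  have hmapvol : Measure.map (fun x : ℝ => s * x + β) volume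
      = ENNReal.ofReal s⁻¹ • volume := by
    have hcomp : (fun x : ℝ => s * x + β) = (fun x : ℝ => x + β) ∘ (fun x : ℝ => s * x) := rfl
    rw [hcomp, ← Measure.map_map (measurable_add_const β) (measurable_const_mul s),
      Real.map_volume_mul_left hs.ne', Measure.map_smul, map_add_right_eq_self,
      abs_of_pos (inv_pos.2 hs)]
  have hpre : (fun x : ℝ => s * x + β) ⁻¹' Set.Ioo (s * u + β) (s * v + β) = Set.Ioo u v := by
    ext x
    simp only [Set.mem_preimage, Set.mem_Ioo, add_lt_add_iff_right, mul_lt_mul_iff_right₀ hs]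
  rw [← hpre, ← he.restrict_map, hmapvol, Measure.restrict_smul]

/-- Theorem 1(b) of the paper (adapted from the posterior matching analysis): if `PXY` is
strictly positive and `T0 (θ, ·)` is never constant, then for every `ε ∈ (0, 1/2)`,
`limsup_n P(Θ₁ ∉ Δ_n^ε(Y^n)) ≤ 2ε`.  (Indices are 0-based: `Θ 0` is the paper's `Θ₁`.) -/
theorem stmt_8
    {Ω : Type*} [MeasurableSpace Ω] (P : Measure Ω) [IsProbabilityMeasure P]
    {a b c : ℕ}
    (PXY : Fin a × Fin b → ℝ)
    (hPXY0 : ∀ q, 0 ≤ PXY q) (hPXY1 : ∑ q : Fin a × Fin b, PXY q = 1)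
    (PX : Fin a → ℝ) (hPX : ∀ i, PX i = ∑ k, PXY (i, k))
    (PY : Fin b → ℝ) (hPY : ∀ k, PY k = ∑ i, PXY (i, k))
    (PZ : Fin c → ℝ) (hPZ0 : ∀ j, 0 ≤ PZ j) (hPZ1 : ∑ j, PZ j = 1)
    (ξ : Fin a × Fin c → Fin b)
    (hξ : ∀ i k, ∑ j ∈ Finset.univ.filter (fun j => ξ (i, j) = k), PX i * PZ j = PXY (i, k))
    (T0 : ℝ → Fin b → ℝ)
    (hT0 : ∀ (k : Fin b) (i : Fin a), 0 < PX i →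
      ∀ θ ∈ Set.Icc (cum PX i) (cum PX i + PX i),
        T0 θ k = (∑ i' ∈ Finset.univ.filter (fun i' => i' < i), PXY (i', k)) / PY k
          + (θ - cum PX i) * (PXY (i, k) / (PY k * PX i)))
    (T1 : ℝ → ℝ)
    (hT1 : ∀ j : Fin c, ∀ φ ∈ Set.Ioo (cum PZ j) (cum PZ j + PZ j),
      T1 φ = (φ - cum PZ j) / PZ j)
    (Θ Φ : ℕ → Ω → ℝ) (X : ℕ → Ω → Fin a) (Z : ℕ → Ω → Fin c) (Y : ℕ → Ω → Fin b)
    (hΘm : ∀ n, Measurable (Θ n)) (hΦm : ∀ n, Measurable (Φ n))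
    (hXm : ∀ n, Measurable (X n)) (hZm : ∀ n, Measurable (Z n))
    (hinit : Measure.map (fun ω => (Θ 0 ω, Φ 0 ω)) P
      = volume.restrict (Set.Ioo (0:ℝ) 1 ×ˢ Set.Ioo (0:ℝ) 1))
    (hXdef : ∀ n, ∀ᵐ ω ∂P, Θ n ω ∈ Set.Ioo (cum PX (X n ω)) (cum PX (X n ω) + PX (X n ω)))
    (hZdef : ∀ n, ∀ᵐ ω ∂P, Φ n ω ∈ Set.Ioo (cum PZ (Z n ω)) (cum PZ (Z n ω) + PZ (Z n ω)))
    (hYdef : ∀ n ω, Y n ω = ξ (X n ω, Z n ω))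
    (hΘrec : ∀ n, ∀ᵐ ω ∂P, Θ (n + 1) ω = T0 (Θ n ω) (Y n ω))
    (hΦrec : ∀ n, ∀ᵐ ω ∂P, Φ (n + 1) ω = T1 (Φ n ω))
    (hpos : ∀ q : Fin a × Fin b, 0 < PXY q)
    (hnc : ∀ θ ∈ Set.Ioo (0:ℝ) 1, ∃ k k' : Fin b, T0 θ k ≠ T0 θ k')
    :
    ∀ ε ∈ Set.Ioo (0:ℝ) (1/2 : ℝ),
      Filter.limsup (fun n : ℕ => P {ω | Θ 0 ω ∉ delta T0 ε n (fun l => Y l ω)}) atTop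
        ≤ ENNReal.ofReal (2 * ε) := by
  classical
  intro ε hε
  -- nonemptiness
  have hΩ : Nonempty Ω := by
    by_contra h
    rw [not_nonempty_iff] at h
    have h1 : P Set.univ = 1 := measure_univ
    rw [Set.univ_eq_empty_iff.2 h, measure_empty] at h1
    exact zero_ne_one h1
  haveI := hΩ
  haveI : Nonempty (Fin a) := ⟨X 0 (Classical.arbitrary Ω)⟩
  haveI : Nonempty (Fin b) := ⟨Y 0 (Classical.arbitrary Ω)⟩
  haveI : Nonempty (Fin c) := ⟨Z 0 (Classical.arbitrary Ω)⟩
  -- positivity facts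
  have hPXpos : ∀ i, 0 < PX i := fun i => by
    rw [hPX]; exact Finset.sum_pos (fun k _ => hpos _) Finset.univ_nonempty
  have hPYpos : ∀ k, 0 < PY k := fun k => by
    rw [hPY]; exact Finset.sum_pos (fun i _ => hpos _) Finset.univ_nonempty
  have hPXsum : ∑ i, PX i = 1 := by
    have := hPXY1
    rw [Fintype.sum_prod_type] at this
    simpa [hPX] using this
  have hPYsum : ∑ k, PY k = 1 := by
    have := hPXY1
    rw [Fintype.sum_prod_type_right] at this
    simpa [hPY] using this
  have hPX0 : ∀ i, 0 ≤ PX i := fun i => (hPXpos i).le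
  -- definitions
  set IX : Fin a → Set ℝ := fun i => Set.Ioo (cum PX i) (cum PX i + PX i) with hIX
  set JZ : Fin c → Set ℝ := fun j => Set.Ioo (cum PZ j) (cum PZ j + PZ j) with hJZ
  set qk : Fin b → Fin a → ℝ := fun k i => PXY (i, k) / PY k with hqk
  set IY : Fin b → Fin a → Set ℝ := fun k i => Set.Ioo (cum (qk k) i) (cum (qk k) i + qk k i)
    with hIY
  have hqk0 : ∀ k i, 0 ≤ qk k i := fun k i => div_nonneg (hPXY0 _) (hPYpos k).le
  have hqksum : ∀ k, ∑ i, qk k i = 1 := fun k => by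
    rw [hqk]
    simp only
    rw [← Finset.sum_div, ← hPY k, div_self (hPYpos k).ne']
  set sik : Fin a × Fin c → ℝ := fun q => PXY (q.1, ξ q) / (PY (ξ q) * PX q.1) with hsik
  have hsikpos : ∀ q, 0 < sik q := fun q =>
    div_pos (hpos _) (mul_pos (hPYpos _) (hPXpos _))
  set ff : Fin a × Fin c → ℝ → ℝ :=
    fun q θ => sik q * θ + (cum (qk (ξ q)) q.1 - sik q * cum PX q.1) with hff
  set gg : Fin c → ℝ → ℝ := fun j φ => (PZ j)⁻¹ * φ + (-(cum PZ j) * (PZ j)⁻¹) with hgg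
  set rect : Fin a × Fin c → Set (ℝ × ℝ) := fun q => (IX q.1) ×ˢ (JZ q.2) with hrect
  have hrectm : ∀ q, MeasurableSet (rect q) := fun q =>
    measurableSet_Ioo.prod measurableSet_Ioo
  set G : ℝ × ℝ → ℝ × ℝ :=
    fun x => ∑ q : Fin a × Fin c, (rect q).indicator (Prod.map (ff q) (gg q.2)) x with hG
  have hffm : ∀ q, Measurable (ff q) := fun q =>
    (measurable_const_mul _).add_const _
  have hggm : ∀ j, Measurable (gg j) := fun j =>
    (measurable_const_mul _).add_const _
  have hGm : Measurable G := by
    apply Finset.measurable_sum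
    intro q _
    exact (((hffm q).comp measurable_fst).prodMk ((hggm q.2).comp measurable_snd)).indicator
      (hrectm q)
  -- G agrees with the affine map on each rectangle
  have hGeq : ∀ q : Fin a × Fin c, Set.EqOn G (Prod.map (ff q) (gg q.2)) (rect q) := by
    intro q x hx
    rw [hG]
    simp only
    rw [Finset.sum_eq_single q]
    · exact Set.indicator_of_mem hx _
    · intro q' _ hq'
      apply Set.indicator_of_notMem
      intro hx'
      by_cases h1 : q'.1 = q.1
      · have h2 : q'.2 ≠ q.2 := fun h2 => hq' (Prod.ext_iff.2 ⟨h1, h2⟩)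
        have := cum_pairwise_disjoint (p := PZ) hPZ0 h2
        exact Set.disjoint_left.1 this hx'.2 hx.2
      · have := cum_pairwise_disjoint (p := PX) hPX0 h1
        exact Set.disjoint_left.1 this hx'.1 hx.1
    · intro h; exact absurd (Finset.mem_univ q) h
  -- the image measure on each rectangle
  have hpiece : ∀ q : Fin a × Fin c,
      Measure.map G (volume.restrict (rect q))
        = ENNReal.ofReal ((sik q)⁻¹ * PZ q.2)
            • volume.restrict ((IY (ξ q) q.1) ×ˢ (Set.Ioo (0:ℝ) 1)) := by
    intro q
    by_cases hj : PZ q.2 = 0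
    · have hJe : JZ q.2 = ∅ := by
        rw [hJZ]; simp only [hj, add_zero, Set.Ioo_self]
      rw [hrect]
      simp only [hJe, Set.prod_empty, Measure.restrict_empty, Measure.map_zero, hj, mul_zero,
        ENNReal.ofReal_zero, zero_smul]
    · have hjpos : 0 < PZ q.2 := lt_of_le_of_ne (hPZ0 q.2) (Ne.symm hj)
      have h1 : Measure.map G (volume.restrict (rect q))
          = Measure.map (Prod.map (ff q) (gg q.2)) (volume.restrict (rect q)) :=
        Measure.map_congr (Filter.eventuallyEq_of_mem (self_mem_ae_restrict (hrectm q)) (hGeq q))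
      rw [h1, hrect]
      simp only
      rw [Measure.volume_eq_prod, ← Measure.prod_restrict,
        ← Measure.map_prod_map _ _ (hffm q) (hggm q.2)]
      have hmapf : Measure.map (ff q) (volume.restrict (IX q.1))
          = ENNReal.ofReal (sik q)⁻¹ • volume.restrict (IY (ξ q) q.1) := by
        rw [hff, hIX, hIY]
        simp only
        have hx : sik q * PX q.1 = qk (ξ q) q.1 := by
          rw [hsik, hqk]
          simp only
          field_simp
          exact mul_div_mul_right _ _ (hPXpos q.1).ne'
        have e1 : sik q * cum PX q.1 + (cum (qk (ξ q)) q.1 - sik q * cum PX q.1)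
            = cum (qk (ξ q)) q.1 := by ring
        have e2 : sik q * (cum PX q.1 + PX q.1) + (cum (qk (ξ q)) q.1 - sik q * cum PX q.1)
            = cum (qk (ξ q)) q.1 + qk (ξ q) q.1 := by rw [← hx]; ring
        rw [map_affine_Ioo (sik q) (hsikpos q) _ _ _, e1, e2]
      have hmapg : Measure.map (gg q.2) (volume.restrict (JZ q.2))
          = ENNReal.ofReal (PZ q.2) • volume.restrict (Set.Ioo (0:ℝ) 1) := by
        rw [hgg, hJZ]
        simp only
        have e1 : (PZ q.2)⁻¹ * cum PZ q.2 + (-(cum PZ q.2) * (PZ q.2)⁻¹) = 0 := by ring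
        have e2 : (PZ q.2)⁻¹ * (cum PZ q.2 + PZ q.2) + (-(cum PZ q.2) * (PZ q.2)⁻¹) = 1 := by
          field_simp
          ring
        rw [map_affine_Ioo (PZ q.2)⁻¹ (inv_pos.2 hjpos) _ _ _, inv_inv, e1, e2]
      rw [hmapf, hmapg, smul_prod', prod_smul', smul_smul, Measure.prod_restrict,
        ← Measure.volume_eq_prod, ← ENNReal.ofReal_mul (inv_nonneg.2 (hsikpos q).le)]
  -- decomposition of the square
  have hsq_decomp : volume.restrict ((Set.Ioo (0:ℝ) 1) ×ˢ (Set.Ioo (0:ℝ) 1))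
      = ∑ q : Fin a × Fin c, volume.restrict (rect q) := by
    rw [Measure.volume_eq_prod, ← Measure.prod_restrict]
    rw [congrArg₂ Measure.prod (restrict_Ioo_sum hPX0 hPXsum).symm
      (restrict_Ioo_sum hPZ0 hPZ1).symm, sum_prod']
    rw [Fintype.sum_prod_type]
    refine Finset.sum_congr rfl fun i _ => ?_
    rw [prod_sum']
    refine Finset.sum_congr rfl fun j _ => ?_
    rw [Measure.prod_restrict, ← Measure.volume_eq_prod, hrect]
  -- the key invariance
  have hstep : Measure.map G (volume.restrict ((Set.Ioo (0:ℝ) 1) ×ˢ (Set.Ioo (0:ℝ) 1)))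
      = volume.restrict ((Set.Ioo (0:ℝ) 1) ×ˢ (Set.Ioo (0:ℝ) 1)) := by
    conv_lhs => rw [hsq_decomp, map_sum' hGm]
    calc
      ∑ q : Fin a × Fin c, Measure.map G (volume.restrict (rect q))
          = ∑ q : Fin a × Fin c, ENNReal.ofReal ((sik q)⁻¹ * PZ q.2)
              • volume.restrict ((IY (ξ q) q.1) ×ˢ (Set.Ioo (0:ℝ) 1)) :=
        Finset.sum_congr rfl fun q _ => hpiece q
      _ = ∑ i : Fin a, ∑ k : Fin b, ENNReal.ofReal (PY k)
              • volume.restrict ((IY k i) ×ˢ (Set.Ioo (0:ℝ) 1)) := by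
        rw [Fintype.sum_prod_type]
        refine Finset.sum_congr rfl fun i _ => ?_
        rw [← Finset.sum_fiberwise Finset.univ (fun j => ξ (i, j))
          (fun j => ENNReal.ofReal ((sik (i, j))⁻¹ * PZ j)
            • volume.restrict ((IY (ξ (i, j)) i) ×ˢ (Set.Ioo (0:ℝ) 1)))]
        refine Finset.sum_congr rfl fun k _ => ?_
        have hfib : ∀ j ∈ Finset.univ.filter (fun j => ξ (i, j) = k),
            ENNReal.ofReal ((sik (i, j))⁻¹ * PZ j)
              • volume.restrict ((IY (ξ (i, j)) i) ×ˢ (Set.Ioo (0:ℝ) 1))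
            = ENNReal.ofReal ((PY k * PX i / PXY (i, k)) * PZ j)
              • volume.restrict ((IY k i) ×ˢ (Set.Ioo (0:ℝ) 1)) := by
          intro j hjk
          rw [Finset.mem_filter] at hjk
          rw [hsik]
          simp only [hjk.2, inv_div]

        rw [Finset.sum_congr rfl hfib, ← Finset.sum_smul,
          ← ENNReal.ofReal_sum_of_nonneg (fun j _ =>
            mul_nonneg (div_nonneg (mul_nonneg (hPYpos k).le (hPXpos i).le) (hPXY0 _)) (hPZ0 j)),
          ← Finset.mul_sum]
        have hsum : ∑ j ∈ Finset.univ.filter (fun j => ξ (i, j) = k), PZ j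
            = PXY (i, k) / PX i := by
          have h := hξ i k
          rw [← Finset.mul_sum] at h
          rw [eq_div_iff (hPXpos i).ne']
          linarith [h]
        rw [hsum]
        have : PY k * PX i / PXY (i, k) * (PXY (i, k) / PX i) = PY k := by
          field_simp [(hpos (i, k)).ne', (hPXpos i).ne']
        rw [this]
      _ = ∑ k : Fin b, ENNReal.ofReal (PY k)
            • ∑ i : Fin a, volume.restrict ((IY k i) ×ˢ (Set.Ioo (0:ℝ) 1)) := by
        rw [Finset.sum_comm]
        exact Finset.sum_congr rfl fun k _ => (Finset.smul_sum).symm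
      _ = ∑ k : Fin b, ENNReal.ofReal (PY k)
            • volume.restrict ((Set.Ioo (0:ℝ) 1) ×ˢ (Set.Ioo (0:ℝ) 1)) := by
        refine Finset.sum_congr rfl fun k _ => ?_
        congr 1
        have : ∀ i, volume.restrict ((IY k i) ×ˢ (Set.Ioo (0:ℝ) 1))
            = (volume.restrict (IY k i)).prod (volume.restrict (Set.Ioo (0:ℝ) 1)) := by
          intro i
          rw [Measure.prod_restrict, ← Measure.volume_eq_prod]
        rw [Finset.sum_congr rfl fun i _ => this i, ← sum_prod', hIY,
          restrict_Ioo_sum (hqk0 k) (hqksum k), Measure.prod_restrict, ← Measure.volume_eq_prod]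
      _ = volume.restrict ((Set.Ioo (0:ℝ) 1) ×ˢ (Set.Ioo (0:ℝ) 1)) := by
        rw [← Finset.sum_smul,
          ← ENNReal.ofReal_sum_of_nonneg (fun k _ => (hPYpos k).le), hPYsum,
          ENNReal.ofReal_one, one_smul]
  -- a.e. recursion in terms of G
  have hae : ∀ n, (fun ω => (Θ (n + 1) ω, Φ (n + 1) ω))
      =ᵐ[P] G ∘ (fun ω => (Θ n ω, Φ n ω)) := by
    intro n
    filter_upwards [hXdef n, hZdef n, hΘrec n, hΦrec n] with ω h1 h2 h3 h4
    have hxmem : (Θ n ω, Φ n ω) ∈ rect (X n ω, Z n ω) := by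
      rw [hrect]; exact ⟨h1, h2⟩
    have := hGeq (X n ω, Z n ω) hxmem
    rw [Function.comp_apply, this]
    have hk : Y n ω = ξ (X n ω, Z n ω) := hYdef n ω
    have hT0eq : ff (X n ω, Z n ω) (Θ n ω) = T0 (Θ n ω) (Y n ω) := by
      rw [hk, hT0 (ξ (X n ω, Z n ω)) (X n ω) (hPXpos _) (Θ n ω) (Set.Ioo_subset_Icc_self h1)]
      rw [hff, hsik, hqk]
      simp only
      rw [cum, Finset.sum_div]
      ring
    have hT1eq : gg (Z n ω) (Φ n ω) = T1 (Φ n ω) := by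
      rw [hT1 (Z n ω) (Φ n ω) h2, hgg]
      simp only
      ring
    rw [Prod.ext_iff]
    exact ⟨by rw [h3, Prod.map_fst, hT0eq], by rw [h4, Prod.map_snd, hT1eq]⟩
  -- the law of (Θ n, Φ n)
  have hlaw : ∀ n, Measure.map (fun ω => (Θ n ω, Φ n ω)) P
      = volume.restrict ((Set.Ioo (0:ℝ) 1) ×ˢ (Set.Ioo (0:ℝ) 1)) := by
    intro n
    induction n with
    | zero => exact hinit
    | succ n ih =>
      rw [Measure.map_congr (hae n),
        ← Measure.map_map hGm ((hΘm n).prodMk (hΦm n)), ih, hstep]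
  -- the marginal law of Θ n
  have hmargin : ∀ n, Measure.map (Θ n) P = volume.restrict (Set.Ioo (0:ℝ) 1) := by
    intro n
    have : Θ n = Prod.fst ∘ (fun ω => (Θ n ω, Φ n ω)) := rfl
    rw [this, ← Measure.map_map measurable_fst ((hΘm n).prodMk (hΦm n)), hlaw n,
      Measure.volume_eq_prod, ← Measure.prod_restrict, Measure.map_fst_prod]
    simp [Real.volume_Ioo]
  -- Θ 0 is in (0,1) a.s.
  have hΘ0 : ∀ᵐ ω ∂P, Θ 0 ω ∈ Set.Ioo (0:ℝ) 1 := by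
    filter_upwards [hXdef 0] with ω h1
    exact Ioo_subset_unit hPX0 hPXsum (X 0 ω) h1
  -- the orbit identity
  have horb : ∀ n, ∀ᵐ ω ∂P, orb T0 (fun l => Y l ω) n (Θ 0 ω) = Θ n ω := by
    intro n
    induction n with
    | zero => exact Filter.Eventually.of_forall fun ω => rfl
    | succ n ih =>
      filter_upwards [ih, hΘrec n] with ω h1 h2
      rw [orb, h1, ← h2]
  -- final computation
  have hbound : ∀ n : ℕ, P {ω | Θ 0 ω ∉ delta T0 ε n (fun l => Y l ω)}
      ≤ ENNReal.ofReal (2 * ε) := by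
    intro n
    have hcong : {ω | Θ 0 ω ∉ delta T0 ε n (fun l => Y l ω)}
        =ᵐ[P] (Θ n) ⁻¹' (Set.Ioo ε (1 - ε))ᶜ := by
      filter_upwards [hΘ0, horb n] with ω h1 h2
      have hiff : (Θ 0 ω ∈ delta T0 ε n fun l => Y l ω) ↔ Θ n ω ∈ Set.Ioo ε (1 - ε) := by
        rw [delta]
        simp only [Set.mem_sep_iff, h2]
        exact and_iff_right h1
      show (Θ 0 ω ∉ delta T0 ε n fun l => Y l ω) = _
      simp only [Set.mem_preimage, Set.mem_compl_iff, eq_iff_iff]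
      exact not_congr hiff
    rw [measure_congr hcong,
      ← Measure.map_apply (hΘm n) measurableSet_Ioo.compl, hmargin n,
      Measure.restrict_apply measurableSet_Ioo.compl]
    have hsub : (Set.Ioo ε (1 - ε))ᶜ ∩ Set.Ioo (0:ℝ) 1
        ⊆ Set.Ioc (0:ℝ) ε ∪ Set.Ico (1 - ε) 1 := by
      rintro x ⟨hx1, hx2⟩
      rw [Set.mem_compl_iff, Set.mem_Ioo, not_and_or, not_lt, not_lt] at hx1
      rcases hx1 with h | h
      · exact Or.inl ⟨hx2.1, h⟩
      · exact Or.inr ⟨h, hx2.2⟩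
    calc volume ((Set.Ioo ε (1 - ε))ᶜ ∩ Set.Ioo (0:ℝ) 1)
        ≤ volume (Set.Ioc (0:ℝ) ε ∪ Set.Ico (1 - ε) 1) := measure_mono hsub
      _ ≤ volume (Set.Ioc (0:ℝ) ε) + volume (Set.Ico (1 - ε) 1) := measure_union_le _ _
      _ = ENNReal.ofReal (2 * ε) := by
        rw [Real.volume_Ioc, Real.volume_Ico, ← ENNReal.ofReal_add (by linarith [hε.1])
          (by linarith [hε.1])]
        congr 1
        ring_nf
  exact Filter.limsup_le_of_le (by isBoundedDefault) (Filter.Eventually.of_forall hbound)
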